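/- arXiv:0708.2772 — 3 statements merged into one kernel-verified Lean document; each statement's English description precedes it below -/
import Mathlib

section
/- For the Basis I chain complex (V₁, ∂₁) in the Spin^c structure of the contact structure, the image of ∂₁ is contained in the kernel of ∂₁, and the quotient space ker ∂₁ / im ∂₁ has dimension 2 over the field with two elements; that is, the homology of (V₁, ∂₁) is isomorphic to ℤ₂ ⊕ ℤ₂. -/
/-- The basis vectors `X, C₁, C₂, E₁₁, E₁₂, F₁` (in this order) of the
6-dimensional vector space `V₁ = (Fin 6 → ZMod 2)` over the field with two elements. -/
def e (i : Fin 6) : Fin 6 → ZMod 2 := Pi.single i 1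

/-- For the Basis I chain complex `(V₁, ∂₁)` in the `Spin^c` structure of the contact
structure, `im ∂₁ ⊆ ker ∂₁` and the homology `ker ∂₁ / im ∂₁` is 2-dimensional over
`ZMod 2`, i.e. isomorphic to `ℤ₂ ⊕ ℤ₂`. -/
theorem stmt1 (D : (Fin 6 → ZMod 2) →ₗ[ZMod 2] (Fin 6 → ZMod 2))
    (hX : D (e 0) = 0)
    (hC1 : D (e 1) = 0)
    (hC2 : D (e 2) = e 0 + e 1)
    (hE11 : D (e 3) = e 0 + e 4)
    (hE12 : D (e 4) = 0)
    (hF1 : D (e 5) = e 4 + e 1) :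
    LinearMap.range D ≤ LinearMap.ker D ∧
    Module.finrank (ZMod 2)
      (↥(LinearMap.ker D) ⧸
        Submodule.comap (LinearMap.ker D).subtype (LinearMap.range D)) = 2 ∧
    Nonempty
      ((↥(LinearMap.ker D) ⧸
        Submodule.comap (LinearMap.ker D).subtype (LinearMap.range D)) ≃ₗ[ZMod 2]
        ZMod 2 × ZMod 2) := by
  have key : ∀ x, D x = (x 2 + x 3) • e 0 + (x 2 + x 5) • e 1 + (x 3 + x 5) • e 4 := by
    intro x
    have he : ∀ i : Fin 6, (fun j => if i = j then (1:ZMod 2) else 0) = e i := by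
      intro i; funext j; simp [e, Pi.single_apply, eq_comm]
    rw [LinearMap.pi_apply_eq_sum_univ D x]
    simp_rw [he]
    rw [Fin.sum_univ_six, hX, hC1, hC2, hE11, hE12, hF1]
    module
  have z2 : ∀ a b : ZMod 2, a + b = 0 ↔ b = a := by decide
  -- kernel characterization
  have hker : ∀ x, x ∈ LinearMap.ker D ↔ x 3 = x 2 ∧ x 5 = x 2 := by
    intro x
    rw [LinearMap.mem_ker, key x]
    constructor
    · intro h
      have h0 := congrFun h 0
      have h1 := congrFun h 1
      simp [e, Pi.single_apply] at h0 h1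
      exact ⟨(z2 _ _).mp h0, (z2 _ _).mp h1⟩
    · rintro ⟨h3, h5⟩
      rw [h3, h5]
      simp [CharTwo.add_self_eq_zero]
  -- range characterization for kernel elements
  have hrange : ∀ x : Fin 6 → ZMod 2, x ∈ LinearMap.ker D →
      (x ∈ LinearMap.range D ↔ (x 0 + x 1 + x 4 = 0 ∧ x 2 = 0)) := by
    intro x hx
    constructor
    · rintro ⟨z, rfl⟩
      rw [key z]
      constructor
      · simp [e, Pi.single_apply]
        ring_nf
        generalize z 2 = a; generalize z 3 = b; generalize z 5 = c
        revert a b c; decide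
      · simp [e, Pi.single_apply]
    · rintro ⟨h014, h2⟩
      obtain ⟨h3, h5⟩ := (hker x).mp hx
      rw [h2] at h3 h5
      refine ⟨x 0 • e 3 + x 1 • e 5, ?_⟩
      rw [map_add, map_smul, map_smul, hE11, hF1]
      funext j
      have h4 : x 4 = x 0 + x 1 := (z2 _ _).mp h014
      fin_cases j <;>
        simp [e, Pi.single_apply, h2, h3, h5, h4]
  -- range ≤ ker
  have hrk : LinearMap.range D ≤ LinearMap.ker D := by
    rintro y ⟨z, rfl⟩
    rw [hker]
    rw [key z]
    simp [e, Pi.single_apply]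
  -- the map φ
  let φ : ↥(LinearMap.ker D) →ₗ[ZMod 2] ZMod 2 × ZMod 2 :=
    { toFun := fun x => (x.1 0 + x.1 1 + x.1 4, x.1 2)
      map_add' := by intro x y; simp [Prod.ext_iff]; ring
      map_smul' := by intro c x; simp [Prod.ext_iff, mul_add] }
  have hkerφ : LinearMap.ker φ =
      Submodule.comap (LinearMap.ker D).subtype (LinearMap.range D) := by
    ext x
    simp only [LinearMap.mem_ker, Submodule.mem_comap, Submodule.coe_subtype]
    rw [hrange x.1 x.2]
    simp [φ, Prod.ext_iff]
  have hsurj : Function.Surjective φ := by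
    rintro ⟨a, b⟩
    refine ⟨⟨a • e 0 + b • (e 2 + e 3 + e 5), ?_⟩, ?_⟩
    · rw [hker]; simp [e, Pi.single_apply]
    · simp [φ, e, Pi.single_apply]
  have equiv : (↥(LinearMap.ker D) ⧸
      Submodule.comap (LinearMap.ker D).subtype (LinearMap.range D)) ≃ₗ[ZMod 2]
      ZMod 2 × ZMod 2 :=
    (Submodule.quotEquivOfEq _ _ hkerφ.symm).trans (φ.quotKerEquivOfSurjective hsurj)
  refine ⟨hrk, ?_, ⟨equiv⟩⟩
  rw [equiv.finrank_eq]
  simp [Module.finrank_prod]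
end

section
/- In the Basis I chain complex (V₁, ∂₁), the basis vector X lies in the kernel of ∂₁ but does not lie in the image of ∂₁; that is, the contact class [X] is a nonzero element of the homology ker ∂₁ / im ∂₁. -/
lemma e_decomp (v : Fin 6 → ZMod 2) : v = ∑ i, v i • e i := by
  funext j
  simp [e, Finset.sum_apply, Pi.single_apply, Finset.sum_ite_eq']

/-- In the Basis I chain complex `(V₁, ∂₁)`, the basis vector `X` lies in `ker ∂₁`
but not in `im ∂₁`; equivalently, the contact class `[X]` is a nonzero element of the
homology `ker ∂₁ / im ∂₁`. -/
theorem stmt2 (D : (Fin 6 → ZMod 2) →ₗ[ZMod 2] (Fin 6 → ZMod 2))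
    (hX : D (e 0) = 0)
    (hC1 : D (e 1) = 0)
    (hC2 : D (e 2) = e 0 + e 1)
    (hE11 : D (e 3) = e 0 + e 4)
    (hE12 : D (e 4) = 0)
    (hF1 : D (e 5) = e 4 + e 1) :
    e 0 ∈ LinearMap.ker D ∧ e 0 ∉ LinearMap.range D ∧
    ∀ (h : e 0 ∈ LinearMap.ker D),
      (Submodule.Quotient.mk (⟨e 0, h⟩ : ↥(LinearMap.ker D)) :
        ↥(LinearMap.ker D) ⧸
          Submodule.comap (LinearMap.ker D).subtype (LinearMap.range D)) ≠ 0 := by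
  have key : ∀ v : Fin 6 → ZMod 2, (D v) 0 + (D v) 1 + (D v) 4 = 0 := by
    intro v
    have h := congrArg D (e_decomp v)
    rw [map_sum] at h
    rw [h]
    rw [Fin.sum_univ_six]
    simp only [map_smul, hX, hC1, hC2, hE11, hE12, hF1]
    simp only [Pi.add_apply, Pi.smul_apply, smul_eq_mul, e, Pi.single_apply]
    norm_num [show (4:Fin 6) ≠ 0 by decide, show (4:Fin 6) ≠ 1 by decide,
      show (0:Fin 6) ≠ 4 by decide, show (1:Fin 6) ≠ 4 by decide]
    ring_nf
    have h2 : (2 : ZMod 2) = 0 := rfl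
    rw [h2]
    ring
  have hnotrange : e 0 ∉ LinearMap.range D := by
    rintro ⟨v, hv⟩
    have := key v
    rw [hv] at this
    simp [e, Pi.single_apply] at this
  refine ⟨hX, hnotrange, ?_⟩
  intro h hq
  rw [Submodule.Quotient.mk_eq_zero] at hq
  exact hnotrange hq
end

section
/- In the Basis I chain complex (V₁, ∂₁), the vectors X and C₂ + E₁₁ + F₁ both lie in the kernel of ∂₁, and their classes in the quotient ker ∂₁ / im ∂₁ form a basis of this 2-dimensional vector space over the field with two elements. -/
private lemma z3 : ∀ a b c : ZMod 2, (a+b)+(a+c)+(b+c) = 0 := by decide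
private lemma z4 : ∀ a b c : ZMod 2, a+b+c = 0 → a+b = c := by decide
private lemma z5 : ∀ a b : ZMod 2, a + b = 0 → a = b := by decide
private lemma h01 : ∀ a : ZMod 2, a = 0 ∨ a = 1 := by decide

private lemma e_apply (i j : Fin 6) : e i j = if i = j then 1 else 0 := by
  simp [e, Pi.single_apply, eq_comm]

private lemma e_eq (i : Fin 6) : e i = fun j => if i = j then 1 else 0 := by
  funext j; exact e_apply i j

section
variable (D : (Fin 6 → ZMod 2) →ₗ[ZMod 2] (Fin 6 → ZMod 2))
    (hX : D (e 0) = 0) (hC1 : D (e 1) = 0) (hC2 : D (e 2) = e 0 + e 1)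
    (hE11 : D (e 3) = e 0 + e 4) (hE12 : D (e 4) = 0) (hF1 : D (e 5) = e 4 + e 1)

include hX hC1 hC2 hE11 hE12 hF1

private lemma hDv (v : Fin 6 → ZMod 2) :
    D v = (v 2 + v 3) • e 0 + (v 2 + v 5) • e 1 + (v 3 + v 5) • e 4 := by
  rw [LinearMap.pi_apply_eq_sum_univ D v, Fin.sum_univ_six,
    ← e_eq 0, ← e_eq 1, ← e_eq 2, ← e_eq 3, ← e_eq 4, ← e_eq 5,
    hX, hC1, hC2, hE11, hE12, hF1]
  module

private lemma mem_range_iff (x : Fin 6 → ZMod 2) :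
    x ∈ LinearMap.range D ↔ x 2 = 0 ∧ x 3 = 0 ∧ x 5 = 0 ∧ x 0 + x 1 + x 4 = 0 := by
  constructor
  · rintro ⟨v, rfl⟩
    rw [hDv D hX hC1 hC2 hE11 hE12 hF1 v]
    refine ⟨by simp [e_apply], by simp [e_apply], by simp [e_apply], ?_⟩
    simpa [e_apply] using z3 (v 2) (v 3) (v 5)
  · rintro ⟨h2, h3, h5, h0⟩
    refine ⟨x 0 • e 3 + x 1 • e 5, ?_⟩
    rw [map_add, map_smul, map_smul, hE11, hF1]
    funext i
    fin_cases i
    · simp [e_apply]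
    · simp [e_apply]
    · simp [e_apply]; exact h2.symm
    · simp [e_apply]; exact h3.symm
    · simp [e_apply]; exact z4 _ _ _ h0
    · simp [e_apply]; exact h5.symm

private lemma mem_ker_cond (v : Fin 6 → ZMod 2) (hv : D v = 0) :
    v 2 = v 3 ∧ v 2 = v 5 := by
  rw [hDv D hX hC1 hC2 hE11 hE12 hF1 v] at hv
  have h0 := congrFun hv 0
  have h1 := congrFun hv 1
  simp [e_apply] at h0 h1
  exact ⟨z5 _ _ h0, z5 _ _ h1⟩

end

/-- the auxiliary linear functional -/
def phi : (Fin 6 → ZMod 2) →ₗ[ZMod 2] (Fin 2 → ZMod 2) where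
  toFun v := ![v 0 + v 1 + v 4, v 2]
  map_add' u v := by funext i; fin_cases i <;> simp <;> ring
  map_smul' c v := by funext i; fin_cases i <;> simp <;> ring

/-- In the Basis I chain complex `(V₁, ∂₁)`, the vectors `X` and `C₂ + E₁₁ + F₁` lie in
`ker ∂₁`, and their classes in the 2-dimensional quotient `ker ∂₁ / im ∂₁` form a basis:
they are linearly independent and span the quotient. -/
theorem stmt3 (D : (Fin 6 → ZMod 2) →ₗ[ZMod 2] (Fin 6 → ZMod 2))
    (hX : D (e 0) = 0)
    (hC1 : D (e 1) = 0)
    (hC2 : D (e 2) = e 0 + e 1)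
    (hE11 : D (e 3) = e 0 + e 4)
    (hE12 : D (e 4) = 0)
    (hF1 : D (e 5) = e 4 + e 1) :
    e 0 ∈ LinearMap.ker D ∧ e 2 + e 3 + e 5 ∈ LinearMap.ker D ∧
    Module.finrank (ZMod 2)
      (↥(LinearMap.ker D) ⧸
        Submodule.comap (LinearMap.ker D).subtype (LinearMap.range D)) = 2 ∧
    ∀ (hx : e 0 ∈ LinearMap.ker D) (hy : e 2 + e 3 + e 5 ∈ LinearMap.ker D),
      LinearIndependent (ZMod 2)
        ![(Submodule.Quotient.mk (⟨e 0, hx⟩ : ↥(LinearMap.ker D)) :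
            ↥(LinearMap.ker D) ⧸
              Submodule.comap (LinearMap.ker D).subtype (LinearMap.range D)),
          Submodule.Quotient.mk (⟨e 2 + e 3 + e 5, hy⟩ : ↥(LinearMap.ker D))] ∧
      Submodule.span (ZMod 2)
        {(Submodule.Quotient.mk (⟨e 0, hx⟩ : ↥(LinearMap.ker D)) :
            ↥(LinearMap.ker D) ⧸
              Submodule.comap (LinearMap.ker D).subtype (LinearMap.range D)),
          Submodule.Quotient.mk (⟨e 2 + e 3 + e 5, hy⟩ : ↥(LinearMap.ker D))} = ⊤ := by
  have hrange := mem_range_iff D hX hC1 hC2 hE11 hE12 hF1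
  have hkerc := mem_ker_cond D hX hC1 hC2 hE11 hE12 hF1
  have hw : e 2 + e 3 + e 5 ∈ LinearMap.ker D := by
    rw [LinearMap.mem_ker, map_add, map_add, hC2, hE11, hF1]
    decide
  refine ⟨hX, hw, ?_, ?_⟩
  · -- finrank
    set p := Submodule.comap (LinearMap.ker D).subtype (LinearMap.range D) with hp
    have hpk : p = LinearMap.ker (phi.comp (LinearMap.ker D).subtype) := by
      ext ⟨v, hv⟩
      obtain ⟨h23, h25⟩ := hkerc v hv
      simp only [hp, Submodule.mem_comap, Submodule.subtype_apply, LinearMap.mem_ker,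
        LinearMap.comp_apply, hrange]
      constructor
      · rintro ⟨h2, h3, h5, h0⟩
        funext i
        fin_cases i
        · simpa [phi] using h0
        · simpa [phi] using h2
      · intro h
        have h0 := congrFun h 0
        have h1 := congrFun h 1
        simp [phi] at h0 h1
        exact ⟨h1, h23 ▸ h1, h25 ▸ h1, h0⟩
    have hsurj : Function.Surjective (phi.comp (LinearMap.ker D).subtype) := by
      intro y
      refine ⟨⟨y 0 • e 0 + y 1 • (e 2 + e 3 + e 5), ?_⟩, ?_⟩
      · exact Submodule.add_mem _ (Submodule.smul_mem _ _ hX) (Submodule.smul_mem _ _ hw)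
      · funext i
        fin_cases i <;> simp [phi, e_apply]
    rw [hpk, (LinearMap.quotKerEquivOfSurjective _ hsurj).finrank_eq]
    simp
  · intro hx hy
    set p := Submodule.comap (LinearMap.ker D).subtype (LinearMap.range D) with hp
    have hnotmem : ∀ u : Fin 6 → ZMod 2, u 2 = 1 ∨ u 0 + u 1 + u 4 = 1 →
        u ∉ LinearMap.range D := by
      intro u hu hmem
      rw [hrange] at hmem
      rcases hu with h | h
      · rw [hmem.1] at h; exact one_ne_zero h.symm
      · rw [hmem.2.2.2] at h; exact one_ne_zero h.symm
    constructor
    · rw [linearIndependent_fin2]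
      refine ⟨?_, ?_⟩
      · simp only [Matrix.cons_val_one, Matrix.head_cons, Matrix.cons_val_zero]
        rw [Ne, Submodule.Quotient.mk_eq_zero]
        intro hmem
        rw [hp, Submodule.mem_comap] at hmem
        exact hnotmem _ (Or.inl (show (e 2 + e 3 + e 5) 2 = 1 by decide)) hmem
      · intro a
        simp only [Matrix.cons_val_zero, Matrix.cons_val_one, Matrix.head_cons]
        rcases h01 a with rfl | rfl
        · rw [zero_smul]
          intro hh
          have hmem : (⟨e 0, hx⟩ : ↥(LinearMap.ker D)) ∈ p := by
            rw [← Submodule.Quotient.mk_eq_zero]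
            exact hh.symm
          rw [hp, Submodule.mem_comap] at hmem
          exact hnotmem _ (Or.inr (show (e 0) 0 + (e 0) 1 + (e 0) 4 = 1 by decide)) hmem
        · rw [one_smul, Ne, Submodule.Quotient.eq]
          intro hmem
          rw [hp, Submodule.mem_comap] at hmem
          refine hnotmem _ (Or.inl ?_) hmem
          show ((e 2 + e 3 + e 5) - e 0) 2 = 1
          decide
    · rw [Submodule.eq_top_iff']
      intro z
      obtain ⟨⟨v, hv⟩, rfl⟩ := Submodule.Quotient.mk_surjective _ z
      obtain ⟨h23, h25⟩ := hkerc v hv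
      have key : (Submodule.Quotient.mk (⟨v, hv⟩ : ↥(LinearMap.ker D)) :
          ↥(LinearMap.ker D) ⧸ p) =
          (v 0 + v 1 + v 4) • Submodule.Quotient.mk (⟨e 0, hx⟩ : ↥(LinearMap.ker D)) +
          v 2 • Submodule.Quotient.mk (⟨e 2 + e 3 + e 5, hy⟩ : ↥(LinearMap.ker D)) := by
        rw [← Submodule.Quotient.mk_smul, ← Submodule.Quotient.mk_smul,
          ← Submodule.Quotient.mk_add, Submodule.Quotient.eq, hp, Submodule.mem_comap]
        have hcoe : ((⟨v, hv⟩ - ((v 0 + v 1 + v 4) • ⟨e 0, hx⟩ +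
            v 2 • ⟨e 2 + e 3 + e 5, hy⟩) : LinearMap.ker D) : Fin 6 → ZMod 2) =
            v - ((v 0 + v 1 + v 4) • e 0 + v 2 • (e 2 + e 3 + e 5)) := rfl
        rw [Submodule.subtype_apply, hcoe, hrange]
        refine ⟨?_, ?_, ?_, ?_⟩
        · simp only [Pi.sub_apply, Pi.add_apply, Pi.smul_apply, e_apply, smul_eq_mul]
          simp
        · simp only [Pi.sub_apply, Pi.add_apply, Pi.smul_apply, e_apply, smul_eq_mul]
          simp
          rw [← h23, sub_self]
        · simp only [Pi.sub_apply, Pi.add_apply, Pi.smul_apply, e_apply, smul_eq_mul]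
          simp
          rw [← h25, sub_self]
        · simp only [Pi.sub_apply, Pi.add_apply, Pi.smul_apply, e_apply, smul_eq_mul]
          simp
          try ring
      rw [key]
      exact Submodule.add_mem _
        (Submodule.smul_mem _ _ (Submodule.subset_span (Set.mem_insert _ _)))
        (Submodule.smul_mem _ _ (Submodule.subset_span (Set.mem_insert_of_mem _ rfl)))
end
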